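/- arXiv:1002.1559 — 4 statements merged into one kernel-verified Lean document; each statement's English description precedes it below -/
import Mathlib

section
/- With s_n defined by s_0 = 1 and s_n = (s_{n-1})^{2^{k_n - k_{n-1}}} · 0^{2^{k_n - (n+1)}} for a strictly increasing sequence (k_n) with k_0 = 1 and k_n ≥ n+1, define f(n) = ∑_{i=1}^n 2^{k_i - (i+1)}. Then for every n ≥ 1: the string s_n ends with the block 1·0^{f(n)}, s_n begins with the symbol 1, and the pattern 1·0^{f(n)}·1 does not occur as a substring of s_n. -/
/-- A suffix of `0^j ++ [1]` whose head is `1` must be `[1]`. -/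
lemma aux_suffix_head_true {j : ℕ} {d : List Bool}
    (h : d <:+ List.replicate j false ++ [true]) (hd : d.head? = some true) :
    d = [true] := by
  induction j with
  | zero =>
      simp only [List.replicate_zero, List.nil_append] at h
      rcases List.suffix_cons_iff.1 h with h1 | h1
      · exact h1
      · have : d = [] := List.eq_nil_of_suffix_nil h1
        rw [this] at hd; simp at hd
  | succ j ih =>
      rw [List.replicate_succ, List.cons_append] at h
      rcases List.suffix_cons_iff.1 h with h1 | h1
      · rw [h1] at hd; simp at hd
      · exact ih h1

/-- no occurrence of `1 0^j 1` in a power `c^m`, given the invariant for `c`. -/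
lemma aux_safe_pow {c : List Bool} {F j : ℕ}
    (hend : ∃ x, c = x ++ true :: List.replicate F false)
    (hstart : ∃ y, c = true :: y)
    (hsafe : ∀ i, F ≤ i → ¬ (true :: (List.replicate i false ++ [true])) <:+: c)
    (hj : F < j) :
    ∀ m, ¬ (true :: (List.replicate j false ++ [true])) <:+: (List.replicate m c).flatten := by
  obtain ⟨x, hx⟩ := hend
  obtain ⟨y, hy⟩ := hstart
  intro m
  induction m with
  | zero =>
      rintro ⟨u, v, huv⟩
      simp only [List.replicate_zero, List.flatten_nil] at huv
      have := congrArg List.length huv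
      simp at this
  | succ m ih =>
      rw [List.replicate_succ, List.flatten_cons]
      rintro ⟨u, v, huv⟩
      rw [List.append_assoc] at huv
      rcases List.append_eq_append_iff.1 huv.symm with ⟨a', hu, hW⟩ | ⟨c', hc, hd⟩
      · exact ih ⟨a', v, by rw [hW, List.append_assoc]⟩
      · rcases List.append_eq_append_iff.1 hd with ⟨a', hc', hv⟩ | ⟨d', hp, hW⟩
        · exact hsafe j hj.le ⟨u, a', by rw [hc, hc', List.append_assoc]⟩
        · by_cases hd0 : d' = []
          · subst hd0
            rw [List.append_nil] at hp
            exact hsafe j hj.le ⟨u, [], by rw [List.append_nil, hc, hp]⟩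
          by_cases hc0 : c' = []
          · subst hc0
            rw [List.nil_append] at hp
            exact ih ⟨[], v, by rw [List.nil_append, hp, ← hW]⟩
          -- both c' and d' nonempty: the pattern straddles the boundary
          obtain ⟨b, c'', rfl⟩ : ∃ b t, c' = b :: t := by
            cases c' with
            | nil => exact absurd rfl hc0
            | cons b t => exact ⟨b, t, rfl⟩
          rw [List.cons_append] at hp
          obtain ⟨hb, hZ⟩ := List.cons_eq_cons.1 hp
          subst hb
          -- d' is a prefix of (replicate m c).flatten hence starts with true
          have hdhead : d'.head? = some true := by
            cases m with
            | zero =>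
                simp only [List.replicate_zero, List.flatten_nil] at hW
                exact absurd (List.append_eq_nil_iff.1 hW.symm).1 hd0
            | succ m' =>
                rw [List.replicate_succ, List.flatten_cons, hy,
                  List.cons_append] at hW
                cases d' with
                | nil => exact absurd rfl hd0
                | cons b2 t2 =>
                    rw [List.cons_append] at hW
                    obtain ⟨hb2, -⟩ := List.cons_eq_cons.1 hW.symm
                    rw [← hb2]; rfl
          have hd1 : d' = [true] := aux_suffix_head_true ⟨c'', hZ.symm⟩ hdhead
          subst hd1
          have hc'' : c'' = List.replicate j false := by
            have h5 : List.replicate j false ++ [true] = c'' ++ [true] := hZ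
            exact (List.append_cancel_right h5).symm
          subst hc''
          -- c ends with 0^j (j > F) and also with 1·0^F : contradiction
          have heq : (u ++ [true]) ++ List.replicate j false
              = x ++ (true :: List.replicate F false) := by
            rw [List.append_assoc, ← hx, hc]; simp
          rcases List.append_eq_append_iff.1 heq with ⟨a', hxa, hrep⟩ | ⟨c₂, hux, hto⟩
          · have : true ∈ List.replicate j false := by
              rw [hrep]; simp
            simpa using List.eq_of_mem_replicate this
          · have hlen := congrArg List.length hto
            simp at hlen
            have hc2 : c₂ = [] := List.length_eq_zero_iff.1 (by omega)
            subst hc2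
            rw [List.nil_append] at hto
            have : true ∈ List.replicate j false := by rw [← hto]; simp
            simpa using List.eq_of_mem_replicate this

/-- appending zeros at the end preserves absence of the pattern. -/
lemma aux_safe_zeros {W : List Bool} {j a : ℕ}
    (h : ¬ (true :: (List.replicate j false ++ [true])) <:+: W) :
    ¬ (true :: (List.replicate j false ++ [true])) <:+: (W ++ List.replicate a false) := by
  rintro ⟨u, v, huv⟩
  rw [List.append_assoc] at huv
  rcases List.append_eq_append_iff.1 huv.symm with ⟨a', hu, hZ⟩ | ⟨c', hW, hd⟩
  · have : true ∈ List.replicate a false := by rw [hZ]; simp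
    simpa using List.eq_of_mem_replicate this
  · rcases List.append_eq_append_iff.1 hd with ⟨a', hc', hv⟩ | ⟨d', hp, hZ⟩
    · exact h ⟨u, a', by rw [hW, hc', List.append_assoc]⟩
    · by_cases hd0 : d' = []
      · subst hd0
        rw [List.append_nil] at hp
        exact h ⟨u, [], by rw [List.append_nil, hW, hp]⟩
      · -- d' is a nonempty suffix of the pattern, so contains `true`,
        -- but it is a prefix of a block of zeros
        rcases List.eq_nil_or_concat d' with rfl | ⟨e, b, rfl⟩
        · exact hd0 rfl
        have hb : b = true := by
          have h4 := congrArg List.getLast? hp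
          rw [show true :: (List.replicate j false ++ [true])
              = (true :: List.replicate j false) ++ [true] by simp,
            List.getLast?_concat, List.concat_eq_append, ← List.append_assoc,
            List.getLast?_concat] at h4
          exact (Option.some_inj.1 h4).symm
        subst hb
        have : true ∈ List.replicate a false := by
          rw [hZ]; simp
        simpa using List.eq_of_mem_replicate this

/-- with `s n` the symbolic names and `f n = ∑_{i=1}^n 2^{k_i-(i+1)}`,
for every `n ≥ 1`: `s n` ends with the block `1·0^{f n}`, `s n` begins with `1`,
and the pattern `1·0^{f n}·1` does not occur as a substring of `s n`. -/
theorem names_end_start_no_pattern (k : ℕ → ℕ) (hk : StrictMono k) (hk0 : k 0 = 1)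
    (hkn : ∀ n : ℕ, n + 1 ≤ k n)
    (s : ℕ → List Bool) (hs0 : s 0 = [true])
    (hsrec : ∀ n : ℕ, 1 ≤ n →
      s n = (List.replicate (2 ^ (k n - k (n - 1))) (s (n - 1))).flatten
              ++ List.replicate (2 ^ (k n - (n + 1))) false)
    (f : ℕ → ℕ) (hf : ∀ n, f n = ∑ i ∈ Finset.Icc 1 n, 2 ^ (k i - (i + 1))) :
    ∀ n : ℕ, 1 ≤ n →
      (∃ u : List Bool, s n = u ++ (true :: List.replicate (f n) false)) ∧
      (∃ v : List Bool, s n = true :: v) ∧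
      ¬ (true :: (List.replicate (f n) false ++ [true])) <:+: s n := by
  have key : ∀ n : ℕ,
      (∃ u : List Bool, s n = u ++ (true :: List.replicate (f n) false)) ∧
      (∃ v : List Bool, s n = true :: v) ∧
      (∀ j, f n ≤ j → ¬ (true :: (List.replicate j false ++ [true])) <:+: s n) := by
    intro n
    induction n with
    | zero =>
        have hf0 : f 0 = 0 := by rw [hf]; simp
        refine ⟨⟨[], by simp [hs0, hf0]⟩, ⟨[], by simp [hs0]⟩, ?_⟩
        rintro j hj ⟨u, v, huv⟩
        rw [hs0] at huv
        have := congrArg List.length huv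
        simp at this
        omega
    | succ n ih =>
        obtain ⟨⟨x, hx⟩, ⟨y, hy⟩, hsafe⟩ := ih
        have hs' := hsrec (n + 1) (by omega)
        simp only [Nat.add_sub_cancel] at hs'
        have ha : 1 ≤ 2 ^ (k (n + 1) - (n + 1 + 1)) := Nat.one_le_two_pow
        have hfs : f (n + 1) = f n + 2 ^ (k (n + 1) - (n + 1 + 1)) := by
          rw [hf, hf, Finset.sum_Icc_succ_top (by omega)]
        obtain ⟨m', hm'⟩ : ∃ m', 2 ^ (k (n + 1) - k n) = m' + 1 :=
          ⟨2 ^ (k (n + 1) - k n) - 1, by have : 1 ≤ 2 ^ (k (n + 1) - k n) := Nat.one_le_two_pow; omega⟩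
        refine ⟨?_, ?_, ?_⟩
        · -- ends with 1·0^{f (n+1)}
          refine ⟨(List.replicate m' (s n)).flatten ++ x, ?_⟩
          rw [hs', hm', List.replicate_succ', List.flatten_append, hfs,
            List.replicate_add]
          simp [hx, List.append_assoc]
        · -- starts with 1
          refine ⟨y ++ ((List.replicate m' (s n)).flatten
              ++ List.replicate (2 ^ (k (n + 1) - (n + 1 + 1))) false), ?_⟩
          rw [hs', hm', List.replicate_succ, List.flatten_cons, hy]
          simp
        · -- no pattern 1·0^j·1 for j ≥ f (n+1)
          intro j hj
          have hj' : f n < j := by omega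
          rw [hs', hm']
          exact aux_safe_zeros (aux_safe_pow ⟨x, hx⟩ ⟨y, hy⟩ hsafe hj' (m' + 1))
  intro n _
  obtain ⟨h1, h2, h3⟩ := key n
  exact ⟨h1, h2, h3 (f n) le_rfl⟩
end

section
/- With s_n as above (s_0 = 1, s_n = (s_{n-1})^{2^{k_n-k_{n-1}}} · 0^{2^{k_n-(n+1)}}, (k_n) strictly increasing, k_0=1, k_n - k_{n-1} ≥ 1), define B(x) = { m : the pattern 1·0^m·1 occurs as a substring of x } (with 1·0^0·1 = 11). Then B(s_n) = { f(i) : 0 ≤ i ≤ n-1 } for all n ≥ 1, where f(0) = 0 and f(i) = ∑_{j=1}^i 2^{k_j - (j+1)}. -/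
private lemma suffix_total {α : Type*} {l₁ l₂ l : List α} (h₁ : l₁ <:+ l) (h₂ : l₂ <:+ l) :
    l₁ <:+ l₂ ∨ l₂ <:+ l₁ := by
  obtain ⟨t₁, ht₁⟩ := h₁
  obtain ⟨t₂, ht₂⟩ := h₂
  have e₁ : l₁ = l.drop t₁.length := by rw [← ht₁, List.drop_left]
  have e₂ : l₂ = l.drop t₂.length := by rw [← ht₂, List.drop_left]
  rcases le_total t₂.length t₁.length with h | h
  · left
    have e3 : l.drop t₁.length = (l.drop t₂.length).drop (t₁.length - t₂.length) := by
      rw [List.drop_drop]; congr 1; omega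
    rw [e₁, e₂, e3]
    exact List.drop_suffix _ _
  · right
    have e3 : l.drop t₂.length = (l.drop t₁.length).drop (t₂.length - t₁.length) := by
      rw [List.drop_drop]; congr 1; omega
    rw [e₁, e₂, e3]
    exact List.drop_suffix _ _

/-- A suffix of `A ++ true :: 0^z` of the form `true :: 0^m` must have `m = z`. -/
private lemma suffix_gap {z m : ℕ} {A : List Bool}
    (h : (true :: List.replicate m false) <:+ (A ++ true :: List.replicate z false)) :
    m = z := by
  have h2 : (true :: List.replicate z false) <:+ (A ++ true :: List.replicate z false) :=
    List.suffix_append _ _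
  rcases suffix_total h h2 with h3 | h3
  · rcases List.suffix_cons_iff.mp h3 with h4 | h4
    · have := congrArg List.length h4
      simp at this; omega
    · exact absurd (List.eq_of_mem_replicate (h4.subset List.mem_cons_self)) (by simp)
  · rcases List.suffix_cons_iff.mp h3 with h4 | h4
    · have := congrArg List.length h4
      simp at this; omega
    · exact absurd (List.eq_of_mem_replicate (h4.subset List.mem_cons_self)) (by simp)

/-- Decomposition of an infix of an append. -/
private lemma infix_append_cases {α : Type*} {p u v : List α} (h : p <:+: u ++ v) :
    p <:+: u ∨ p <:+: v ∨
      ∃ p₁ p₂, p = p₁ ++ p₂ ∧ p₁ ≠ [] ∧ p₂ ≠ [] ∧ p₁ <:+ u ∧ p₂ <+: v := by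
  obtain ⟨a, b, hab⟩ := h
  have hu : u = (a ++ p ++ b).take u.length := by rw [hab, List.take_left]
  have hv : v = (a ++ p ++ b).drop u.length := by rw [hab, List.drop_left]
  obtain ⟨lu, hlu⟩ : ∃ lu, u.length = lu := ⟨_, rfl⟩
  rw [hlu, List.append_assoc] at hu hv
  rcases le_or_gt (a.length + p.length) lu with hle | hgt
  · left
    refine ⟨a, b.take (lu - a.length - p.length), ?_⟩
    rw [hu, List.take_append,
      List.take_of_length_le (show a.length ≤ lu by omega),
      List.take_append,
      List.take_of_length_le (show p.length ≤ lu - a.length by omega), ← List.append_assoc]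
  rcases le_or_gt lu a.length with hle2 | hgt2
  · right; left
    refine ⟨a.drop lu, b, ?_⟩
    rw [hv, List.drop_append, Nat.sub_eq_zero_of_le hle2, List.drop_zero,
      ← List.append_assoc]
  · right; right
    have hjp : lu - a.length < p.length := by omega
    refine ⟨p.take (lu - a.length), p.drop (lu - a.length),
      (List.take_append_drop _ p).symm, ?_, ?_, ?_, ?_⟩
    · intro hnil
      have := congrArg List.length hnil
      simp only [List.length_take, List.length_nil] at this
      omega
    · intro hnil
      have := congrArg List.length hnil
      simp only [List.length_drop, List.length_nil] at this
      omega
    · have heq : u = a ++ p.take (lu - a.length) := by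
        rw [hu, List.take_append,
          List.take_of_length_le (show a.length ≤ lu by omega),
          List.take_append,
          Nat.sub_eq_zero_of_le (show lu - a.length ≤ p.length by omega),
          List.take_zero, List.append_nil]
      exact ⟨a, heq.symm⟩
    · have heq : v = p.drop (lu - a.length) ++ b := by
        rw [hv, List.drop_append,
          List.drop_eq_nil_of_le (show a.length ≤ lu by omega), List.nil_append,
          List.drop_append,
          Nat.sub_eq_zero_of_le (show lu - a.length ≤ p.length by omega), List.drop_zero]
      exact ⟨b, heq.symm⟩

/-- A nonempty suffix of `X ++ [a]` contains `a`. -/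
private lemma mem_of_suffix_concat {α : Type*} {a : α} {X l : List α}
    (h : l <:+ X ++ [a]) (hl : l ≠ []) : a ∈ l := by
  obtain ⟨t, ht⟩ := h
  obtain ⟨l', b, rfl⟩ := l.eq_nil_or_concat.resolve_left hl
  rw [List.concat_eq_append, ← List.append_assoc] at ht
  have := (List.append_inj' ht (by simp)).2
  simp only [List.cons.injEq] at this
  simp [this.1]

/-- If the gap pattern is an infix of `W ++ 0^Z` then it is an infix of `W`. -/
private lemma infix_of_infix_append_zeros {m Z : ℕ} {W : List Bool}
    (h : (true :: (List.replicate m false ++ [true])) <:+: W ++ List.replicate Z false) :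
    (true :: (List.replicate m false ++ [true])) <:+: W := by
  rcases infix_append_cases h with h1 | h1 | ⟨p₁, p₂, hp, h1ne, h2ne, hsuf, hpre⟩
  · exact h1
  · exfalso
    have : true ∈ List.replicate Z false := h1.subset (by simp)
    exact absurd (List.eq_of_mem_replicate this) (by simp)
  · exfalso
    have hsufp : p₂ <:+ (true :: List.replicate m false) ++ [true] := by
      rw [← List.cons_append] at hp
      exact ⟨p₁, hp.symm⟩
    have h5 : true ∈ p₂ := mem_of_suffix_concat hsufp h2ne
    have : true ∈ List.replicate Z false := hpre.subset h5
    exact absurd (List.eq_of_mem_replicate this) (by simp)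

/-- Gaps in a power of `s`: either inside one copy, or the boundary gap `z`. -/
private lemma infix_flatten_replicate {z m : ℕ} {s T A : List Bool}
    (hT : s = true :: T) (hA : s = A ++ true :: List.replicate z false) :
    ∀ c : ℕ, (true :: (List.replicate m false ++ [true])) <:+: (List.replicate c s).flatten →
      (true :: (List.replicate m false ++ [true])) <:+: s ∨ m = z := by
  intro c
  induction c with
  | zero =>
    intro h
    rw [List.replicate_zero, List.flatten_nil, List.infix_nil] at h
    exact absurd h (by simp)
  | succ c ih =>
    intro h
    rw [List.replicate_succ, List.flatten_cons] at h
    rcases infix_append_cases h with h1 | h1 | ⟨p₁, p₂, hp, h1ne, h2ne, hsuf, hpre⟩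
    · exact Or.inl h1
    · exact ih h1
    · -- crossing case
      match p₁, h1ne with
      | x :: xs, _ =>
        simp only [List.cons_append, List.cons.injEq] at hp
        obtain ⟨rfl, hp2⟩ := hp
        -- hp2 : 0^m ++ [true] = xs ++ p₂
        have hxslen : xs.length ≤ m := by
          have hlen := congrArg List.length hp2
          simp only [List.length_append, List.length_replicate, List.length_cons,
            List.length_nil] at hlen
          have : p₂.length ≠ 0 := fun h0 => h2ne (List.eq_nil_of_length_eq_zero h0)
          omega
        have hp₂eq : p₂ = List.replicate (m - xs.length) false ++ [true] := by
          have h5 : p₂ = (List.replicate m false ++ [true]).drop xs.length := by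
            rw [hp2, List.drop_left]
          rw [h5, List.drop_append, List.drop_replicate,
            List.length_replicate, Nat.sub_eq_zero_of_le hxslen, List.drop_zero]
        rcases Nat.eq_or_lt_of_le hxslen with heq | hlt
        · -- p₁ = true :: 0^m is a suffix of s
          right
          have hxs : xs = List.replicate m false := by
            have h5 : xs = (List.replicate m false ++ [true]).take xs.length := by
              rw [hp2, List.take_left]
            rw [h5, heq, List.take_append, List.take_replicate,
              List.length_replicate, Nat.sub_self, List.take_zero, List.append_nil,
              Nat.min_self]
          rw [hxs, hA] at hsuf
          exact suffix_gap hsuf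
        · -- p₂ starts with false but is a prefix of something starting with true
          exfalso
          obtain ⟨j, hj⟩ := Nat.exists_eq_succ_of_ne_zero (by omega : m - xs.length ≠ 0)
          rw [hj, List.replicate_succ, List.cons_append] at hp₂eq
          match c with
          | 0 =>
            rw [List.replicate_zero, List.flatten_nil, List.prefix_nil] at hpre
            exact h2ne hpre
          | c + 1 =>
            rw [List.replicate_succ, List.flatten_cons, hT, List.cons_append] at hpre
            obtain ⟨t, ht⟩ := hpre
            rw [hp₂eq] at ht
            simp at ht

/-- with `B(x) = {m | the pattern 1·0^m·1 occurs as a substring of x}`,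
for every `n ≥ 1` we have `B(s n) = {f i | 0 ≤ i ≤ n-1}`, where `f 0 = 0` and
`f i = ∑_{j=1}^i 2^{k_j-(j+1)}`. -/
theorem gap_lengths_of_names (k : ℕ → ℕ) (hk : StrictMono k) (hk0 : k 0 = 1)
    (hgap : ∀ n : ℕ, 1 ≤ n → 1 ≤ k n - k (n - 1))
    (s : ℕ → List Bool) (hs0 : s 0 = [true])
    (hsrec : ∀ n : ℕ, 1 ≤ n →
      s n = (List.replicate (2 ^ (k n - k (n - 1))) (s (n - 1))).flatten
              ++ List.replicate (2 ^ (k n - (n + 1))) false)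
    (f : ℕ → ℕ) (hf : ∀ n, f n = ∑ j ∈ Finset.Icc 1 n, 2 ^ (k j - (j + 1))) :
    ∀ n : ℕ, 1 ≤ n →
      {m : ℕ | (true :: (List.replicate m false ++ [true])) <:+: s n}
        = {m : ℕ | ∃ i : ℕ, i ≤ n - 1 ∧ m = f i} := by
  have hf0 : f 0 = 0 := by rw [hf]; simp
  have hfs : ∀ n : ℕ, f (n + 1) = f n + 2 ^ (k (n + 1) - (n + 2)) := by
    intro n
    rw [hf, hf, Finset.sum_Icc_succ_top (by omega)]
  -- every s n starts with true
  have starts : ∀ n, ∃ T, s n = true :: T := by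
    intro n
    induction n with
    | zero => exact ⟨[], hs0⟩
    | succ n ih =>
      obtain ⟨T, hT⟩ := ih
      rw [hsrec (n + 1) (by omega)]
      simp only [Nat.add_sub_cancel]
      obtain ⟨c', hc'⟩ : ∃ c', 2 ^ (k (n + 1) - k n) = c' + 1 :=
        ⟨2 ^ (k (n + 1) - k n) - 1, by have := Nat.one_le_two_pow (n := k (n + 1) - k n); omega⟩
      rw [hc', List.replicate_succ, List.flatten_cons, hT]
      refine ⟨T ++ ((List.replicate c' (true :: T)).flatten
        ++ List.replicate (2 ^ (k (n + 1) - (n + 1 + 1))) false), ?_⟩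
      simp
  -- every s n ends with true :: 0^(f n)
  have ends : ∀ n, ∃ A, s n = A ++ true :: List.replicate (f n) false := by
    intro n
    induction n with
    | zero => exact ⟨[], by rw [hs0, hf0]; simp⟩
    | succ n ih =>
      obtain ⟨A, hA⟩ := ih
      rw [hsrec (n + 1) (by omega)]
      simp only [Nat.add_sub_cancel]
      obtain ⟨c', hc'⟩ : ∃ c', 2 ^ (k (n + 1) - k n) = c' + 1 :=
        ⟨2 ^ (k (n + 1) - k n) - 1, by have := Nat.one_le_two_pow (n := k (n + 1) - k n); omega⟩
      rw [hc', List.replicate_succ', List.flatten_append, hA, hfs n, List.replicate_add]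
      refine ⟨(List.replicate c' (A ++ true :: List.replicate (f n) false)).flatten ++ A, ?_⟩
      simp [List.append_assoc]
  -- prefix chain
  have step : ∀ n : ℕ, s n <+: s (n + 1) := by
    intro n
    rw [hsrec (n + 1) (by omega)]
    simp only [Nat.add_sub_cancel]
    obtain ⟨c', hc'⟩ : ∃ c', 2 ^ (k (n + 1) - k n) = c' + 1 :=
      ⟨2 ^ (k (n + 1) - k n) - 1, by have := Nat.one_le_two_pow (n := k (n + 1) - k n); omega⟩
    rw [hc', List.replicate_succ, List.flatten_cons, List.append_assoc]
    exact List.prefix_append _ _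
  have spre : ∀ a b : ℕ, a ≤ b → s a <+: s b := by
    intro a b hab
    induction b, hab using Nat.le_induction with
    | base => exact List.prefix_refl _
    | succ b hb ih => exact ih.trans (step b)
  -- the pattern with gap f i occurs in s (i+1)
  have key : ∀ i : ℕ,
      (true :: (List.replicate (f i) false ++ [true])) <:+: s (i + 1) := by
    intro i
    obtain ⟨T, hT⟩ := starts i
    obtain ⟨A, hA⟩ := ends i
    have hocc : (true :: (List.replicate (f i) false ++ [true])) <:+: s i ++ s i := by
      refine ⟨A, T, ?_⟩
      nth_rewrite 1 [hA]
      nth_rewrite 1 [hT]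
      simp
    have hc2 : 2 ≤ 2 ^ (k (i + 1) - k i) := by
      have h1 : 1 ≤ k (i + 1) - k i := by
        have := hgap (i + 1) (by omega)
        simpa using this
      calc (2 : ℕ) = 2 ^ 1 := by norm_num
        _ ≤ 2 ^ (k (i + 1) - k i) := Nat.pow_le_pow_right (by norm_num) h1
    obtain ⟨c', hc'⟩ : ∃ c', 2 ^ (k (i + 1) - k i) = c' + 2 :=
      ⟨2 ^ (k (i + 1) - k i) - 2, by omega⟩
    have hpre : s i ++ s i <+: s (i + 1) := by
      rw [hsrec (i + 1) (by omega)]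
      simp only [Nat.add_sub_cancel]
      rw [hc', List.replicate_succ, List.replicate_succ, List.flatten_cons, List.flatten_cons]
      refine ⟨(List.replicate c' (s i)).flatten
        ++ List.replicate (2 ^ (k (i + 1) - (i + 1 + 1))) false, ?_⟩
      simp [List.append_assoc]
    exact hocc.trans hpre.isInfix
  -- forward direction
  have fwd : ∀ n : ℕ, 1 ≤ n → ∀ m : ℕ,
      (true :: (List.replicate m false ++ [true])) <:+: s n → ∃ i, i ≤ n - 1 ∧ m = f i := by
    intro n hn
    induction n, hn using Nat.le_induction with
    | base =>
      intro m hm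
      rw [hsrec 1 (by omega)] at hm
      simp only [Nat.sub_self] at hm
      have hm' := infix_of_infix_append_zeros hm
      have h0T : s 0 = true :: ([] : List Bool) := by rw [hs0]
      have h0A : s 0 = [] ++ true :: List.replicate 0 false := by rw [hs0]; rfl
      rcases infix_flatten_replicate h0T h0A _ hm' with h1 | h1
      · exfalso
        have := h1.length_le
        rw [hs0] at this
        simp at this
      · exact ⟨0, by omega, by rw [h1, hf0]⟩
    | succ n hn ih =>
      intro m hm
      rw [hsrec (n + 1) (by omega)] at hm
      simp only [Nat.add_sub_cancel] at hm
      have hm' := infix_of_infix_append_zeros hm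
      obtain ⟨T, hT⟩ := starts n
      obtain ⟨A, hA⟩ := ends n
      rcases infix_flatten_replicate hT hA _ hm' with h1 | h1
      · obtain ⟨i, hi, hmi⟩ := ih m h1
        exact ⟨i, by omega, hmi⟩
      · exact ⟨n, by omega, h1⟩
  intro n hn
  ext m
  simp only [Set.mem_setOf_eq]
  constructor
  · exact fwd n hn m
  · rintro ⟨i, hi, rfl⟩
    have h1 : i + 1 ≤ n := by omega
    exact (key i).trans (spre (i + 1) n h1).isInfix
end

section
/- Let (C_n) be an extending sequence of columns on [0,1] with w(C_n) → 0 and λ(⋃_n S(C_n)) = 1, and let T be the invertible measure-preserving transformation defined (a.e.) by the limit of the partial transformations of the C_n. Then T is ergodic: every measurable set A with T(A) = A has λ(A) ∈ {0, 1}. -/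
open MeasureTheory ENNReal

/-- A column: an ordered tuple of `h` half-open intervals of common width `w`,
with left endpoints `a i`; level `i` is `(a i, a i + w]`. -/
structure Column where
  h : ℕ
  w : ℝ
  a : Fin h → ℝ

namespace Column

/-- Level `i` of the column. -/
def level (C : Column) (i : Fin C.h) : Set ℝ := Set.Ioc (C.a i) (C.a i + C.w)

/-- The support of a column: the union of its levels. -/
def support (C : Column) : Set ℝ := ⋃ i, C.level i

/-- Concatenation `C * C'` of two columns (of equal width): stack `C'` on top of `C`. -/
def concat (C C' : Column) : Column := ⟨C.h + C'.h, C.w, Fin.append C.a C'.a⟩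

/-- One step of cutting and stacking: `C * C = C_L * C_R`, cutting each level in half. -/
noncomputable def cutStack (C : Column) : Column :=
  ⟨C.h + C.h, C.w / 2, Fin.append C.a (fun i => C.a i + C.w / 2)⟩

/-- `C.iter k` is `C(k)`: `k` iterations of cutting and stacking. -/
noncomputable def iter (C : Column) : ℕ → Column
  | 0 => C
  | n + 1 => (C.iter n).cutStack

/-- The levels of a column are pairwise disjoint. -/
def LevelsDisjoint (C : Column) : Prop :=
  ∀ i j : Fin C.h, i ≠ j → Disjoint (C.level i) (C.level j)

end Column

/-- The initial column `C_0`, the single interval `X^1 = (1/2, 1]`. -/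
noncomputable def baseCol : Column := ⟨1, 1 / 2, fun _ => 1 / 2⟩

/-- The column of height one given by `A_n = (2^{-(n+1)}, 2^{-n}]`. -/
noncomputable def colA (n : ℕ) : Column := ⟨1, (2 : ℝ) ^ (-(n + 1 : ℤ)), fun _ => (2 : ℝ) ^ (-(n + 1 : ℤ))⟩

/-- The columns `C_n = C_{n-1}(k_n - k_{n-1}) * A_n(k_n - (n+1))` of the Theorem 2
construction. -/
noncomputable def cols (k : ℕ → ℕ) : ℕ → Column
  | 0 => baseCol
  | n + 1 => ((cols k n).iter (k (n + 1) - k n)).concat ((colA (n + 1)).iter (k (n + 1) - (n + 2)))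

open Filter

private lemma image_iterate_eq {T : ℝ → ℝ} {A : Set ℝ} (h : T '' A = A) :
    ∀ k : ℕ, T^[k] '' A = A := by
  intro k
  induction k with
  | zero => simp
  | succ n ih => rw [Function.iterate_succ', Set.image_comp, ih, h]

private lemma column_iterate {Cn : Column} {T : ℝ → ℝ}
    (hT : ∀ (i : ℕ) (hi : i + 1 < Cn.h), ∀ x ∈ Cn.level ⟨i, by omega⟩,
      T x = x - Cn.a ⟨i, by omega⟩ + Cn.a ⟨i + 1, hi⟩) :
    ∀ (k i : ℕ) (hik : i + k < Cn.h), ∀ x ∈ Cn.level ⟨i, by omega⟩,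
      T^[k] x = x - Cn.a ⟨i, by omega⟩ + Cn.a ⟨i + k, hik⟩ := by
  intro k
  induction k with
  | zero => intro i hik x hx; simp
  | succ n ih =>
    intro i hik x hx
    have h1 : i + n < Cn.h := by omega
    have h2 := ih i h1 x hx
    have hx' : x ∈ Set.Ioc (Cn.a ⟨i, by omega⟩) (Cn.a ⟨i, by omega⟩ + Cn.w) := hx
    rw [Set.mem_Ioc] at hx'
    have hmem : T^[n] x ∈ Cn.level ⟨i + n, h1⟩ := by
      rw [h2]
      simp only [Column.level, Set.mem_Ioc]
      constructor <;> [linarith [hx'.1]; linarith [hx'.2]]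
    have h3 := hT (i + n) (by omega) _ hmem
    rw [Function.iterate_succ_apply', h3, h2]
    have : (⟨i + n + 1, by omega⟩ : Fin Cn.h) = ⟨i + (n + 1), hik⟩ := by
      apply Fin.ext; simp; omega
    rw [this]
    ring

private lemma meas_level_eq {Cn : Column} {T : ℝ → ℝ} {A : Set ℝ}
    (hT : ∀ (i : ℕ) (hi : i + 1 < Cn.h), ∀ x ∈ Cn.level ⟨i, by omega⟩,
      T x = x - Cn.a ⟨i, by omega⟩ + Cn.a ⟨i + 1, hi⟩)
    (hTinj : Function.Injective T) (hTA : T '' A = A)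
    (i j : ℕ) (hi : i < Cn.h) (hj : j < Cn.h) (hij : i ≤ j) :
    volume (A ∩ Cn.level ⟨j, hj⟩) = volume (A ∩ Cn.level ⟨i, hi⟩) := by
  set c := Cn.a ⟨j, hj⟩ - Cn.a ⟨i, hi⟩ with hc
  have hk : i + (j - i) < Cn.h := by omega
  have hfin : (⟨i + (j - i), hk⟩ : Fin Cn.h) = ⟨j, hj⟩ := by
    apply Fin.ext; simp; omega
  have key : ∀ x ∈ Cn.level ⟨i, hi⟩, T^[j - i] x = x + c := by
    intro x hx
    have h2 := column_iterate hT (j - i) i hk x hx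
    rw [hfin] at h2
    rw [h2, hc]; ring
  have himg : (· + c) '' Cn.level ⟨i, hi⟩ = Cn.level ⟨j, hj⟩ := by
    show (fun x => x + c) '' Set.Ioc _ _ = Set.Ioc _ _
    rw [Set.image_add_const_Ioc]
    congr 1 <;> (rw [hc]; ring)
  have hset : A ∩ Cn.level ⟨j, hj⟩ = (· + c) '' (A ∩ Cn.level ⟨i, hi⟩) := by
    apply Set.Subset.antisymm
    · rintro z ⟨hzA, hzL⟩
      rw [← himg] at hzL
      obtain ⟨x, hxL, rfl⟩ := hzL
      refine ⟨x, ⟨?_, hxL⟩, rfl⟩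
      have hTk : T^[j - i] x = x + c := key x hxL
      have hzA' : x + c ∈ T^[j - i] '' A := by
        rw [image_iterate_eq hTA]; exact hzA
      obtain ⟨a, haA, ha⟩ := hzA'
      have : a = x := hTinj.iterate (j - i) (by rw [ha, hTk])
      rwa [← this]
    · rintro z ⟨x, ⟨hxA, hxL⟩, rfl⟩
      refine ⟨?_, ?_⟩
      · rw [← image_iterate_eq hTA (j - i)]
        exact ⟨x, hxA, key x hxL⟩
      · rw [← himg]; exact ⟨x, hxL, rfl⟩
  rw [hset, Set.image_add_right]
  exact measure_preimage_add_right volume (-c) _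


/-- the invertible measure-preserving transformation defined in the limit
by an extending sequence of columns with widths tending to `0` and supports of full
measure is ergodic: any measurable invariant set has measure `0` or `1`. -/
theorem limit_transformation_ergodic (C : ℕ → Column)
    (hdisj : ∀ n, (C n).LevelsDisjoint)
    (hsub : ∀ n, (C n).support ⊆ Set.Icc (0 : ℝ) 1)
    (hext : ∀ n, (C n).support ⊆ (C (n + 1)).support)
    (hwidth : Tendsto (fun n => (C n).w) atTop (nhds 0))
    (hfull : volume (⋃ n, (C n).support) = 1)
    (T : ℝ → ℝ) (hTbij : Function.Bijective T)
    (hTpres : MeasurePreserving T (volume.restrict (Set.Icc (0 : ℝ) 1))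
      (volume.restrict (Set.Icc (0 : ℝ) 1)))
    (hT : ∀ (n : ℕ) (i : ℕ) (hi : i + 1 < (C n).h),
      ∀ x ∈ (C n).level ⟨i, by omega⟩,
        T x = x - (C n).a ⟨i, by omega⟩ + (C n).a ⟨i + 1, hi⟩) :
    ∀ A : Set ℝ, MeasurableSet A → A ⊆ Set.Icc (0 : ℝ) 1 → T '' A = A →
      volume A = 0 ∨ volume A = 1 := by
  intro A hA hAsub hTA
  by_contra hcon
  push_neg at hcon
  obtain ⟨h0, h1⟩ := hcon
  have hIcc : volume (Set.Icc (0:ℝ) 1) = 1 := by simp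
  have hAle : volume A ≤ 1 := hIcc ▸ measure_mono hAsub
  have hAlt : volume A < 1 := lt_of_le_of_ne hAle h1
  have hAfin : volume A ≠ ⊤ := (lt_of_le_of_lt hAle ENNReal.one_lt_top).ne
  have hApos : 0 < volume A := pos_iff_ne_zero.mpr h0
  set B := Set.Icc (0:ℝ) 1 \ A with hBdef
  have hBmeas : MeasurableSet B := measurableSet_Icc.diff hA
  have hBvol : 0 < volume B := by
    rw [hBdef, measure_diff hAsub hA.nullMeasurableSet hAfin, hIcc]
    exact tsub_pos_of_lt hAlt
  set S := ⋃ n, (C n).support with hSdef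
  have hSmeas : MeasurableSet S := by
    apply MeasurableSet.iUnion
    intro n
    exact MeasurableSet.iUnion fun i => measurableSet_Ioc
  have hSsub : S ⊆ Set.Icc (0:ℝ) 1 := Set.iUnion_subset hsub
  have hScompl : volume (Set.Icc (0:ℝ) 1 \ S) = 0 := by
    rw [measure_diff hSsub hSmeas.nullMeasurableSet (by rw [hfull]; exact ENNReal.one_ne_top),
      hfull, hIcc, tsub_self]
  have hAS : 0 < volume (A ∩ S) := by
    have hd : volume (A \ S) = 0 :=
      measure_mono_null (Set.diff_subset_diff_left hAsub) hScompl
    have := measure_le_inter_add_diff volume A S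
    rw [hd, add_zero] at this
    exact lt_of_lt_of_le hApos this
  have hBS : 0 < volume (B ∩ S) := by
    have hd : volume (B \ S) = 0 :=
      measure_mono_null (Set.diff_subset_diff_left Set.diff_subset) hScompl
    have := measure_le_inter_add_diff volume B S
    rw [hd, add_zero] at this
    exact lt_of_lt_of_le hBvol this
  -- density point extraction
  have exists_density : ∀ s : Set ℝ, 0 < volume (s ∩ S) → ∃ x ∈ S,
      Tendsto (fun r => volume (s ∩ Metric.closedBall x r) / volume (Metric.closedBall x r))
        (nhdsWithin 0 (Set.Ioi 0)) (nhds 1) := by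
    intro s hs
    by_contra hcon2
    push_neg at hcon2
    have hae : ∀ᵐ x ∂(volume.restrict s), x ∉ S := by
      filter_upwards [Besicovitch.ae_tendsto_measure_inter_div volume s] with x hx hxS
      exact hcon2 x hxS hx
    have h0' : (volume.restrict s) S = 0 := by
      have := ae_iff.mp hae
      simpa using this
    rw [Measure.restrict_apply hSmeas, Set.inter_comm] at h0'
    exact hs.ne' h0'
  obtain ⟨x, hxS, hxT⟩ := exists_density A hAS
  obtain ⟨y, hyS, hyT⟩ := exists_density B hBS
  have h78 : (7/8 : ℝ≥0∞) < 1 := by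
    rw [ENNReal.div_lt_iff (by norm_num) (by norm_num)]; norm_num
  have hxev : ∀ᶠ r in nhdsWithin 0 (Set.Ioi 0),
      (7/8 : ℝ≥0∞) < volume (A ∩ Metric.closedBall x r) / volume (Metric.closedBall x r) :=
    hxT.eventually (eventually_gt_nhds h78)
  have hyev : ∀ᶠ r in nhdsWithin 0 (Set.Ioi 0),
      (7/8 : ℝ≥0∞) < volume (B ∩ Metric.closedBall y r) / volume (Metric.closedBall y r) :=
    hyT.eventually (eventually_gt_nhds h78)
  obtain ⟨u, hu, husub⟩ := mem_nhdsGT_iff_exists_Ioc_subset.mp hxev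
  obtain ⟨v, hv, hvsub⟩ := mem_nhdsGT_iff_exists_Ioc_subset.mp hyev
  rw [Set.mem_Ioi] at hu hv
  -- supports are monotone
  have hmono : ∀ {n m : ℕ}, n ≤ m → (C n).support ⊆ (C m).support := by
    intro n m hnm
    exact monotone_nat_of_le_succ (f := fun n => (C n).support) hext hnm
  obtain ⟨n1, hn1⟩ := Set.mem_iUnion.mp hxS
  obtain ⟨n2, hn2⟩ := Set.mem_iUnion.mp hyS
  have hev2 : ∀ᶠ m in atTop, (C m).w < min u v :=
    hwidth.eventually (eventually_lt_nhds (lt_min hu hv))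
  obtain ⟨m, hwm, hm⟩ := (hev2.and (eventually_ge_atTop (max n1 n2))).exists
  have hxm : x ∈ (C m).support := hmono (le_trans (le_max_left n1 n2) hm) hn1
  have hym : y ∈ (C m).support := hmono (le_trans (le_max_right n1 n2) hm) hn2
  obtain ⟨i, hxi⟩ := Set.mem_iUnion.mp hxm
  obtain ⟨j, hyj⟩ := Set.mem_iUnion.mp hym
  set w := (C m).w with hwdef
  have hxi' := hxi
  have hyj' := hyj
  simp only [Column.level, Set.mem_Ioc] at hxi' hyj'
  have hwpos : 0 < w := by linarith [hxi'.1, hxi'.2]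
  have hwu : w ∈ Set.Ioc (0:ℝ) u := ⟨hwpos, le_of_lt (lt_of_lt_of_le hwm (min_le_left u v))⟩
  have hwv : w ∈ Set.Ioc (0:ℝ) v := ⟨hwpos, le_of_lt (lt_of_lt_of_le hwm (min_le_right u v))⟩
  have hrx := husub hwu
  have hry := hvsub hwv
  simp only [Set.mem_setOf_eq] at hrx hry
  set c2w := ENNReal.ofReal (2 * w) with hc2w
  have hc2w0 : c2w ≠ 0 := by
    rw [hc2w]
    simp only [ne_eq, ENNReal.ofReal_eq_zero, not_le]
    linarith
  have hc2wtop : c2w ≠ ⊤ := ENNReal.ofReal_ne_top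
  have hvolcb : ∀ z : ℝ, volume (Metric.closedBall z w) = c2w := fun z => Real.volume_closedBall z w
  rw [hvolcb x] at hrx
  rw [hvolcb y] at hry
  have hmulx : (7/8 : ℝ≥0∞) * c2w < volume (A ∩ Metric.closedBall x w) :=
    (ENNReal.lt_div_iff_mul_lt (Or.inl hc2w0) (Or.inl hc2wtop)).mp hrx
  have hmuly : (7/8 : ℝ≥0∞) * c2w < volume (B ∩ Metric.closedBall y w) :=
    (ENNReal.lt_div_iff_mul_lt (Or.inl hc2w0) (Or.inl hc2wtop)).mp hry
  have h78top : (7/8 : ℝ≥0∞) * c2w ≠ ⊤ := ENNReal.mul_ne_top (ENNReal.div_lt_top (by norm_num) (by norm_num)).ne hc2wtop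
  have hsplit : (7/8 : ℝ≥0∞) * c2w + ENNReal.ofReal (w/4) = c2w := by
    rw [hc2w, show (7/8 : ℝ≥0∞) = ENNReal.ofReal (7/8) by
        rw [ENNReal.ofReal_div_of_pos (by norm_num)]; norm_num [ENNReal.ofReal_ofNat],
      ← ENNReal.ofReal_mul (by norm_num), ← ENNReal.ofReal_add (by positivity) (by positivity)]
    congr 1; ring
  -- bound on the bad parts of the balls
  have hbound : ∀ (s : Set ℝ) (z : ℝ), MeasurableSet s →
      (7/8 : ℝ≥0∞) * c2w < volume (s ∩ Metric.closedBall z w) →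
      volume (Metric.closedBall z w \ s) < ENNReal.ofReal (w/4) := by
    intro s z hsm hlt
    have hsum : volume (Metric.closedBall z w ∩ s) + volume (Metric.closedBall z w \ s)
        = c2w := by rw [measure_inter_add_diff _ hsm, hvolcb]
    rw [Set.inter_comm] at hsum
    have hdtop : volume (Metric.closedBall z w \ s) ≠ ⊤ := by
      refine (lt_of_le_of_lt (measure_mono Set.diff_subset) ?_).ne
      rw [hvolcb]; exact hc2wtop.lt_top
    have : (7/8 : ℝ≥0∞) * c2w + volume (Metric.closedBall z w \ s) < c2w := by
      calc (7/8 : ℝ≥0∞) * c2w + volume (Metric.closedBall z w \ s)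
          < volume (s ∩ Metric.closedBall z w) + volume (Metric.closedBall z w \ s) :=
            ENNReal.add_lt_add_right hdtop hlt
        _ = c2w := hsum
    have h2 : (7/8 : ℝ≥0∞) * c2w + volume (Metric.closedBall z w \ s)
        < (7/8 : ℝ≥0∞) * c2w + ENNReal.ofReal (w/4) := by rw [hsplit]; exact this
    exact (ENNReal.add_lt_add_iff_left h78top).mp h2
  have hdx := hbound A x hA hmulx
  have hdy := hbound B y hBmeas hmuly
  -- the levels
  have hLsub : ∀ (p : ℝ) (b : ℝ), p ∈ Set.Ioc b (b + w) →
      Set.Ioc b (b + w) ⊆ Metric.closedBall p w := by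
    intro p b hp z hz
    rw [Set.mem_Ioc] at hp hz
    rw [Metric.mem_closedBall, Real.dist_eq, abs_le]
    constructor <;> linarith [hp.1, hp.2, hz.1, hz.2]
  have hLx : (C m).level i ⊆ Metric.closedBall x w := hLsub x _ hxi
  have hLy : (C m).level j ⊆ Metric.closedBall y w := hLsub y _ hyj
  -- A ∩ level j is small
  have hALj : volume (A ∩ (C m).level j) < ENNReal.ofReal (w/4) := by
    refine lt_of_le_of_lt (measure_mono ?_) hdy
    rintro z ⟨hzA, hzL⟩
    refine ⟨hLy hzL, ?_⟩
    rw [hBdef]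
    simp only [Set.mem_diff, not_and, not_not]
    intro _; exact hzA
  -- level measures are equal
  have heq : volume (A ∩ (C m).level i) = volume (A ∩ (C m).level j) := by
    have hieq : (⟨(i : ℕ), i.isLt⟩ : Fin (C m).h) = i := Fin.eta i i.isLt
    have hjeq : (⟨(j : ℕ), j.isLt⟩ : Fin (C m).h) = j := Fin.eta j j.isLt
    rcases le_total (i : ℕ) (j : ℕ) with hij | hij
    · have := meas_level_eq (hT m) hTbij.injective hTA (i : ℕ) (j : ℕ) i.isLt j.isLt hij
      rw [hieq, hjeq] at this
      exact this.symm
    · have := meas_level_eq (hT m) hTbij.injective hTA (j : ℕ) (i : ℕ) j.isLt i.isLt hij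
      rw [hieq, hjeq] at this
      exact this
  -- A ∩ level i is big
  have hvolL : volume ((C m).level i) = ENNReal.ofReal w := by
    show volume (Set.Ioc _ _) = _
    rw [Real.volume_Ioc]
    congr 1; ring
  have hsumL : volume (A ∩ (C m).level i) + volume ((C m).level i \ A)
      = ENNReal.ofReal w := by
    rw [Set.inter_comm, measure_inter_add_diff _ hA, hvolL]
  have hdiffL : volume ((C m).level i \ A) < ENNReal.ofReal (w/4) :=
    lt_of_le_of_lt (measure_mono (Set.diff_subset_diff_left hLx)) hdx
  have hfinal : ENNReal.ofReal w < ENNReal.ofReal (w/4) + ENNReal.ofReal (w/4) := by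
    calc ENNReal.ofReal w = volume (A ∩ (C m).level i) + volume ((C m).level i \ A) :=
          hsumL.symm
      _ = volume (A ∩ (C m).level j) + volume ((C m).level i \ A) := by rw [heq]
      _ < ENNReal.ofReal (w/4) + ENNReal.ofReal (w/4) := ENNReal.add_lt_add hALj hdiffL
  rw [← ENNReal.ofReal_add (by positivity) (by positivity)] at hfinal
  rw [ENNReal.ofReal_lt_ofReal_iff (by positivity)] at hfinal
  linarith
end

section
/- In the Theorem 2 construction, let B_0 = C_0 and B_n = ⋃_{i=1}^{(2^{k_n-k_{n-1}}-1) h(C_{n-1})} L_i where C_n = (L_1,...,L_{h_n}) (i.e., B_n is all but the top copy of C_{n-1} inside C_n together with none of the new A_n part). Then λ(⋂_{i=0}^n B_i) = λ(B_0) · ∏_{i=1}^n (1 - 2^{-(k_i - k_{i-1})}), and if k_i - k_{i-1} ≥ i for all i, then λ(⋂_{i=0}^∞ B_i) > 0. -/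
open MeasureTheory ENNReal

namespace Column

-- basic lemmas
lemma cutStack_level_cast (C : Column) (i : Fin C.h) :
    C.cutStack.level (Fin.castAdd C.h i) = Set.Ioc (C.a i) (C.a i + C.w / 2) := by
  simp only [level, cutStack, Fin.append_left]

lemma cutStack_level_nat (C : Column) (i : Fin C.h) :
    C.cutStack.level (Fin.natAdd C.h i) = Set.Ioc (C.a i + C.w / 2) (C.a i + C.w) := by
  simp only [level, cutStack, Fin.append_right]
  ring_nf

lemma level_eq_cutStack_union (C : Column) (hw : 0 ≤ C.w) (i : Fin C.h) :
    C.level i = C.cutStack.level (Fin.castAdd C.h i) ∪ C.cutStack.level (Fin.natAdd C.h i) := by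
  rw [cutStack_level_cast, cutStack_level_nat, Set.Ioc_union_Ioc_eq_Ioc (by linarith) (by linarith)]
  rfl

lemma cutStack_level_subset (C : Column) (hw : 0 ≤ C.w) (i : Fin C.h) :
    C.cutStack.level (Fin.castAdd C.h i) ⊆ C.level i := by
  rw [level_eq_cutStack_union C hw i]; exact Set.subset_union_left

lemma cutStack_level_subset' (C : Column) (hw : 0 ≤ C.w) (i : Fin C.h) :
    C.cutStack.level (Fin.natAdd C.h i) ⊆ C.level i := by
  rw [level_eq_cutStack_union C hw i]; exact Set.subset_union_right

lemma cutStack_levelsDisjoint (C : Column) (hw : 0 ≤ C.w) (hd : C.LevelsDisjoint) :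
    C.cutStack.LevelsDisjoint := by
  intro p q hpq
  have key : ∀ i : Fin C.h,
      Disjoint (C.cutStack.level (Fin.castAdd C.h i)) (C.cutStack.level (Fin.natAdd C.h i)) := by
    intro i
    rw [cutStack_level_cast, cutStack_level_nat]
    exact Set.Ioc_disjoint_Ioc_of_le le_rfl
  induction p using Fin.addCases with
  | left i =>
    induction q using Fin.addCases with
    | left j =>
      have hij : i ≠ j := fun h => hpq (by rw [h])
      exact (hd i j hij).mono (cutStack_level_subset C hw i) (cutStack_level_subset C hw j)
    | right j =>
      rcases eq_or_ne i j with rfl | hij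
      · exact key i
      · exact (hd i j hij).mono (cutStack_level_subset C hw i) (cutStack_level_subset' C hw j)
  | right i =>
    induction q using Fin.addCases with
    | left j =>
      rcases eq_or_ne j i with rfl | hij
      · exact (key j).symm
      · exact (hd i j (Ne.symm hij)).mono (cutStack_level_subset' C hw i) (cutStack_level_subset C hw j)
    | right j =>
      have hij : i ≠ j := fun h => hpq (by rw [h])
      exact (hd i j hij).mono (cutStack_level_subset' C hw i) (cutStack_level_subset' C hw j)

lemma iter_h (C : Column) (m : ℕ) : (C.iter m).h = 2 ^ m * C.h := by
  induction m with
  | zero => simp [iter]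
  | succ m ih => show (C.iter m).h + (C.iter m).h = _; rw [ih]; ring

lemma iter_w (C : Column) (m : ℕ) : (C.iter m).w = C.w / 2 ^ m := by
  induction m with
  | zero => simp [iter]
  | succ m ih => show (C.iter m).w / 2 = _; rw [ih]; ring

lemma iter_w_nonneg (C : Column) (hw : 0 ≤ C.w) (m : ℕ) : 0 ≤ (C.iter m).w := by
  rw [iter_w]; positivity

lemma iter_levelsDisjoint (C : Column) (hw : 0 ≤ C.w) (hd : C.LevelsDisjoint) (m : ℕ) :
    (C.iter m).LevelsDisjoint := by
  induction m with
  | zero => exact hd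
  | succ m ih => exact cutStack_levelsDisjoint _ (iter_w_nonneg C hw m) ih

-- union decomposition over Fin (A + B)
lemma biUnion_addCases {A B : ℕ} (f : Fin (A + B) → Set ℝ) (P : Fin (A + B) → Prop) :
    ⋃ p ∈ {p | P p}, f p =
      (⋃ q ∈ {q : Fin A | P (Fin.castAdd B q)}, f (Fin.castAdd B q)) ∪
      (⋃ q ∈ {q : Fin B | P (Fin.natAdd A q)}, f (Fin.natAdd A q)) := by
  ext x
  simp only [Set.mem_iUnion, Set.mem_union, Set.mem_setOf_eq, exists_prop]
  constructor
  · rintro ⟨p, hP, hx⟩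
    induction p using Fin.addCases with
    | left q => exact Or.inl ⟨q, hP, hx⟩
    | right q => exact Or.inr ⟨q, hP, hx⟩
  · rintro (⟨q, hP, hx⟩ | ⟨q, hP, hx⟩)
    · exact ⟨_, hP, hx⟩
    · exact ⟨_, hP, hx⟩

lemma biUnion_union_same {ι : Type*} (s : Set ι) (f g : ι → Set ℝ) :
    (⋃ i ∈ s, f i) ∪ (⋃ i ∈ s, g i) = ⋃ i ∈ s, (f i ∪ g i) := by
  ext x
  simp only [Set.mem_iUnion, Set.mem_union, exists_prop]
  constructor
  · rintro (⟨i, hi, hx⟩ | ⟨i, hi, hx⟩)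
    · exact ⟨i, hi, Or.inl hx⟩
    · exact ⟨i, hi, Or.inr hx⟩
  · rintro ⟨i, hi, hx | hx⟩
    · exact Or.inl ⟨i, hi, hx⟩
    · exact Or.inr ⟨i, hi, hx⟩

/-- Key slicing lemma: a union of levels of `C`, described by a condition on residues
mod `C.h`, equals the corresponding union of levels of `C.iter m`. -/
lemma iter_biUnion (C : Column) (hw : 0 ≤ C.w) (T : Set ℕ) (m : ℕ) :
    ⋃ p ∈ {p : Fin (C.iter m).h | p.val % C.h ∈ T}, (C.iter m).level p =
      ⋃ i ∈ {i : Fin C.h | i.val % C.h ∈ T}, C.level i := by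
  induction m with
  | zero => rfl
  | succ m ih =>
    have hstep : ⋃ p ∈ {p : Fin ((C.iter m).h + (C.iter m).h) | p.val % C.h ∈ T},
        (C.iter m).cutStack.level p =
        ⋃ q ∈ {q : Fin (C.iter m).h | q.val % C.h ∈ T}, (C.iter m).level q := by
      erw [biUnion_addCases]
      have hc : {q : Fin (C.iter m).h | (Fin.castAdd (C.iter m).h q).val % C.h ∈ T} =
          {q : Fin (C.iter m).h | q.val % C.h ∈ T} := rfl
      have hn : {q : Fin (C.iter m).h | (Fin.natAdd (C.iter m).h q).val % C.h ∈ T} =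
          {q : Fin (C.iter m).h | q.val % C.h ∈ T} := by
        ext q
        simp only [Set.mem_setOf_eq, Fin.coe_natAdd]
        have hA : (C.iter m).h % C.h = 0 := by rw [iter_h]; exact Nat.mul_mod_left _ _
        rw [Nat.add_mod, hA, Nat.zero_add, Nat.mod_mod_of_dvd _ dvd_rfl]
      rw [hc, hn, biUnion_union_same]
      apply Set.iUnion₂_congr
      intro q _
      exact (level_eq_cutStack_union (C.iter m) (iter_w_nonneg C hw m) q).symm
    exact hstep.trans ih

lemma level_subset_support (C : Column) (i : Fin C.h) : C.level i ⊆ C.support :=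
  Set.subset_iUnion _ i

lemma support_cutStack (C : Column) (hw : 0 ≤ C.w) : C.cutStack.support = C.support := by
  apply subset_antisymm
  · apply Set.iUnion_subset
    intro p
    induction p using Fin.addCases with
    | left q => exact (cutStack_level_subset C hw q).trans (level_subset_support C q)
    | right q => exact (cutStack_level_subset' C hw q).trans (level_subset_support C q)
  · apply Set.iUnion_subset
    intro i
    rw [level_eq_cutStack_union C hw i]
    exact Set.union_subset (level_subset_support _ _) (level_subset_support _ _)

lemma support_iter (C : Column) (hw : 0 ≤ C.w) (m : ℕ) : (C.iter m).support = C.support := by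
  induction m with
  | zero => rfl
  | succ m ih => exact (support_cutStack _ (iter_w_nonneg C hw m)).trans ih

lemma concat_level_cast (C D : Column) (p : Fin C.h) :
    (C.concat D).level (Fin.castAdd D.h p) = C.level p := by
  simp only [level, concat, Fin.append_left]

lemma concat_level_nat (C D : Column) (hww : C.w = D.w) (q : Fin D.h) :
    (C.concat D).level (Fin.natAdd C.h q) = D.level q := by
  simp only [level, concat, Fin.append_right, hww]

lemma support_concat (C D : Column) (hww : C.w = D.w) :
    (C.concat D).support = C.support ∪ D.support := by
  apply subset_antisymm
  · apply Set.iUnion_subset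
    intro p
    induction p using Fin.addCases with
    | left q =>
      rw [concat_level_cast]
      exact (level_subset_support C q).trans Set.subset_union_left
    | right q =>
      rw [concat_level_nat C D hww]
      exact (level_subset_support D q).trans Set.subset_union_right
  · apply Set.union_subset
    · apply Set.iUnion_subset
      intro q
      rw [← concat_level_cast C D q]
      exact level_subset_support _ _
    · apply Set.iUnion_subset
      intro q
      rw [← concat_level_nat C D hww q]
      exact level_subset_support _ _

lemma concat_levelsDisjoint (C D : Column) (hww : C.w = D.w)
    (hC : C.LevelsDisjoint) (hD : D.LevelsDisjoint)
    (hsup : Disjoint C.support D.support) : (C.concat D).LevelsDisjoint := by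
  intro p q hpq
  induction p using Fin.addCases with
  | left i =>
    induction q using Fin.addCases with
    | left j =>
      have hij : i ≠ j := fun h => hpq (by rw [h])
      rw [concat_level_cast, concat_level_cast]
      exact hC i j hij
    | right j =>
      rw [concat_level_cast, concat_level_nat C D hww]
      exact hsup.mono (level_subset_support C i) (level_subset_support D j)
  | right i =>
    induction q using Fin.addCases with
    | left j =>
      rw [concat_level_cast, concat_level_nat C D hww]
      exact (hsup.mono (level_subset_support C j) (level_subset_support D i)).symm
    | right j =>
      have hij : i ≠ j := fun h => hpq (by rw [h])
      rw [concat_level_nat C D hww, concat_level_nat C D hww]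
      exact hD i j hij

lemma measurableSet_level (C : Column) (i : Fin C.h) : MeasurableSet (C.level i) :=
  measurableSet_Ioc

lemma volume_level (C : Column) (i : Fin C.h) : volume (C.level i) = ENNReal.ofReal C.w := by
  rw [level, Real.volume_Ioc]
  congr 1
  ring

/-- Volume of a union of levels indexed by a finset of raw indices. -/
lemma volume_biUnion_levels (C : Column) (hd : C.LevelsDisjoint) (V : Finset ℕ)
    (hV : ∀ v ∈ V, v < C.h) :
    volume (⋃ p ∈ {p : Fin C.h | p.val ∈ V}, C.level p) = V.card * ENNReal.ofReal C.w := by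
  classical
  have hset : (⋃ p ∈ {p : Fin C.h | p.val ∈ V}, C.level p)
      = ⋃ p ∈ (Finset.univ.filter (fun p : Fin C.h => p.val ∈ V)), C.level p := by
    simp
  rw [hset, measure_biUnion_finset]
  · rw [Finset.sum_congr rfl (fun p _ => volume_level C p), Finset.sum_const, nsmul_eq_mul]
    congr 2
    apply Finset.card_bij (fun (p : Fin C.h) _ => p.val)
    · intro p hp; simpa using hp
    · intro p hp q hq h; exact Fin.ext h
    · intro v hv
      exact ⟨⟨v, hV v hv⟩, by simpa using hv, rfl⟩
  · intro p _ q _ hpq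
    exact hd p q hpq
  · intro p _
    exact measurableSet_level C p

/-- Intersecting two unions of levels of a column with disjoint levels. -/
lemma inter_biUnion_levels (C : Column) (hd : C.LevelsDisjoint) (P Q : Fin C.h → Prop) :
    (⋃ p ∈ {p | P p}, C.level p) ∩ (⋃ p ∈ {p | Q p}, C.level p)
      = ⋃ p ∈ {p | P p ∧ Q p}, C.level p := by
  ext x
  simp only [Set.mem_inter_iff, Set.mem_iUnion, Set.mem_setOf_eq, exists_prop]
  constructor
  · rintro ⟨⟨p, hP, hx⟩, ⟨q, hQ, hx'⟩⟩
    have hpq : p = q := by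
      by_contra hne
      exact (hd p q hne).le_bot ⟨hx, hx'⟩
    exact ⟨p, ⟨hP, hpq ▸ hQ⟩, hx⟩
  · rintro ⟨p, ⟨hP, hQ⟩, hx⟩
    exact ⟨⟨p, hP, hx⟩, ⟨p, hQ, hx⟩⟩

lemma concat_biUnion_cast (C D : Column) (P : ℕ → Prop) :
    ⋃ q ∈ {q : Fin (C.concat D).h | q.val < C.h ∧ P q.val}, (C.concat D).level q
      = ⋃ p ∈ {p : Fin C.h | P p.val}, C.level p := by
  ext x
  simp only [Set.mem_iUnion, Set.mem_setOf_eq, exists_prop]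
  constructor
  · rintro ⟨q, ⟨hlt, hP⟩, hx⟩
    refine ⟨⟨q.val, hlt⟩, hP, ?_⟩
    have hq : q = Fin.castAdd D.h ⟨q.val, hlt⟩ := Fin.ext rfl
    rw [hq, concat_level_cast] at hx
    exact hx
  · rintro ⟨p, hP, hx⟩
    exact ⟨Fin.castAdd D.h p, ⟨p.isLt, hP⟩, by rw [concat_level_cast]; exact hx⟩

end Column

/-- `B_0 = C_0` (the support of the base column), and `B_n` is the union of all levels of
`C_n` except the top copy of `C_{n-1}` and the newly added part `A_n(k_n - (n+1))`,
i.e. the first `(2^{k_n - k_{n-1}} - 1)·h(C_{n-1})` levels of `C_n`. -/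
noncomputable def Bset (k : ℕ → ℕ) : ℕ → Set ℝ
  | 0 => baseCol.support
  | n + 1 => ⋃ i ∈ {i : Fin (cols k (n + 1)).h |
      i.1 < (2 ^ (k (n + 1) - k n) - 1) * (cols k n).h}, (cols k (n + 1)).level i

open Column

section Construction

variable (k : ℕ → ℕ) (hk : StrictMono k) (hk0 : k 0 = 1)

include hk hk0 in
lemma k_ge (n : ℕ) : n + 1 ≤ k n := by
  induction n with
  | zero => omega
  | succ n ih => have := hk (show n < n + 1 by omega); omega

lemma baseCol_support : baseCol.support = Set.Ioc (1 / 2 : ℝ) 1 := by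
  have : ∀ i : Fin 1, baseCol.level i = Set.Ioc (1 / 2 : ℝ) 1 := by
    intro i
    show Set.Ioc (1 / 2 : ℝ) (1 / 2 + 1 / 2) = _
    norm_num
  exact (Set.iUnion_congr this).trans (Set.iUnion_const _)

lemma colA_support (n : ℕ) :
    (colA n).support = Set.Ioc ((2 : ℝ) ^ (-(n + 1 : ℤ))) ((2 : ℝ) ^ (-(n : ℤ))) := by
  have key : (2 : ℝ) ^ (-(n + 1 : ℤ)) + (2 : ℝ) ^ (-(n + 1 : ℤ)) = (2 : ℝ) ^ (-(n : ℤ)) := by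
    rw [← two_mul, ← zpow_one_add₀ (two_ne_zero)]
    congr 1
    ring
  have : ∀ i : Fin 1, (colA n).level i = Set.Ioc ((2 : ℝ) ^ (-(n + 1 : ℤ))) ((2 : ℝ) ^ (-(n : ℤ))) := by
    intro i
    show Set.Ioc ((2 : ℝ) ^ (-(n + 1 : ℤ))) ((2 : ℝ) ^ (-(n + 1 : ℤ)) + (2 : ℝ) ^ (-(n + 1 : ℤ))) = _
    rw [key]
  exact (Set.iUnion_congr this).trans (Set.iUnion_const _)

include hk hk0 in
lemma cols_w (n : ℕ) : (cols k n).w = (2 : ℝ) ^ (-(k n : ℤ)) := by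
  induction n with
  | zero =>
    show (1 / 2 : ℝ) = _
    rw [hk0]
    norm_num
  | succ n ih =>
    have hmono : k n ≤ k (n + 1) := (hk (show n < n + 1 by omega)).le
    have hcast : ((k (n + 1) - k n : ℕ) : ℤ) = (k (n + 1) : ℤ) - k n := by
      push_cast [Nat.cast_sub hmono]; ring
    show ((cols k n).iter (k (n + 1) - k n)).w = _
    rw [iter_w, ih, ← zpow_natCast (2 : ℝ) (k (n + 1) - k n), ← zpow_sub₀ (two_ne_zero)]
    congr 1
    omega

include hk hk0 in
lemma cols_w_pos (n : ℕ) : 0 < (cols k n).w := by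
  rw [cols_w k hk hk0]
  positivity

include hk hk0 in
lemma colA_iter_w (n : ℕ) :
    ((colA (n + 1)).iter (k (n + 1) - (n + 2))).w = (2 : ℝ) ^ (-(k (n + 1) : ℤ)) := by
  have hge : n + 2 ≤ k (n + 1) := k_ge k hk hk0 (n + 1)
  have : (colA (n + 1)).w = (2 : ℝ) ^ (-(n + 2 : ℤ)) := by
    show (2 : ℝ) ^ (-((n + 1 : ℕ) + 1 : ℤ)) = _
    congr 1
  rw [iter_w, this, ← zpow_natCast (2 : ℝ) (k (n + 1) - (n + 2)), ← zpow_sub₀ (two_ne_zero)]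
  congr 1
  omega

lemma colA_w_nonneg (n : ℕ) : 0 ≤ (colA n).w := by
  show (0 : ℝ) ≤ 2 ^ (-(n + 1 : ℤ))
  positivity

include hk hk0 in
lemma cols_support (n : ℕ) : (cols k n).support = Set.Ioc ((2 : ℝ) ^ (-(n + 1 : ℤ))) 1 := by
  induction n with
  | zero =>
    rw [show cols k 0 = baseCol from rfl, baseCol_support]
    norm_num
  | succ n ih =>
    have hww : ((cols k n).iter (k (n + 1) - k n)).w
        = ((colA (n + 1)).iter (k (n + 1) - (n + 2))).w := by
      rw [iter_w, cols_w k hk hk0, colA_iter_w k hk hk0,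
        ← zpow_natCast (2 : ℝ) (k (n + 1) - k n), ← zpow_sub₀ (two_ne_zero)]
      congr 1
      have := (hk (show n < n + 1 by omega)).le
      omega
    show (((cols k n).iter (k (n + 1) - k n)).concat _).support = _
    rw [support_concat _ _ hww, support_iter _ (cols_w_pos k hk hk0 n).le,
      support_iter _ (colA_w_nonneg (n + 1)), ih, colA_support]
    push_cast
    have h1 : ((2 : ℝ) ^ (-(n + 1 + 1 : ℤ))) ≤ (2 : ℝ) ^ (-(n + 1 : ℤ)) := by
      apply zpow_le_zpow_right₀ (by norm_num)
      omega
    have h2 : ((2 : ℝ) ^ (-(n + 1 : ℤ))) ≤ 1 := by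
      rw [show (1 : ℝ) = (2 : ℝ) ^ (0 : ℤ) from (zpow_zero 2).symm]
      apply zpow_le_zpow_right₀ (by norm_num)
      omega
    rw [Set.union_comm, Set.Ioc_union_Ioc_eq_Ioc h1 h2]

lemma baseCol_levelsDisjoint : baseCol.LevelsDisjoint := by
  intro i j hij
  have hi : i.val < 1 := i.isLt
  have hj : j.val < 1 := j.isLt
  exact absurd (Fin.ext (by omega)) hij

lemma colA_levelsDisjoint (n : ℕ) : (colA n).LevelsDisjoint := by
  intro i j hij
  have hi : i.val < 1 := i.isLt
  have hj : j.val < 1 := j.isLt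
  exact absurd (Fin.ext (by omega)) hij

include hk hk0 in
lemma cols_levelsDisjoint (n : ℕ) : (cols k n).LevelsDisjoint := by
  induction n with
  | zero => exact baseCol_levelsDisjoint
  | succ n ih =>
    have hww : ((cols k n).iter (k (n + 1) - k n)).w
        = ((colA (n + 1)).iter (k (n + 1) - (n + 2))).w := by
      rw [iter_w, cols_w k hk hk0, colA_iter_w k hk hk0,
        ← zpow_natCast (2 : ℝ) (k (n + 1) - k n), ← zpow_sub₀ (two_ne_zero)]
      congr 1
      have := (hk (show n < n + 1 by omega)).le
      omega
    apply concat_levelsDisjoint _ _ hww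
    · exact iter_levelsDisjoint _ (cols_w_pos k hk hk0 n).le ih _
    · exact iter_levelsDisjoint _ (colA_w_nonneg (n + 1)) (colA_levelsDisjoint (n + 1)) _
    · rw [support_iter _ (cols_w_pos k hk hk0 n).le, support_iter _ (colA_w_nonneg (n + 1)),
        cols_support k hk hk0, colA_support]
      rw [Set.Ioc_disjoint_Ioc]
      apply min_le_of_right_le
      have : -((n : ℤ) + 1 + 1) = -((n : ℤ) + 1) - 1 := by ring
      exact le_max_of_le_left (le_refl _)

include hk hk0 in
omit hk hk0 in
lemma cols_h_pos (n : ℕ) : 0 < (cols k n).h := by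
  induction n with
  | zero => exact Nat.one_pos
  | succ n ih =>
    show 0 < ((cols k n).iter (k (n + 1) - k n)).h + _
    rw [iter_h]
    positivity

end Construction


section MainInduction

variable (k : ℕ → ℕ) (hk : StrictMono k) (hk0 : k 0 = 1)

include hk hk0 in
lemma main_structure (n : ℕ) : ∃ V : Finset ℕ,
    (∀ v ∈ V, v < (cols k n).h) ∧
    ((⋂ i ∈ Finset.range (n + 1), Bset k i)
      = ⋃ p ∈ {p : Fin (cols k n).h | p.val ∈ V}, (cols k n).level p) ∧
    V.card = ∏ i ∈ Finset.Icc 1 n, (2 ^ (k i - k (i - 1)) - 1) := by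
  induction n with
  | zero =>
    refine ⟨{0}, ?_, ?_, ?_⟩
    · intro v hv
      have : v = 0 := Finset.mem_singleton.mp hv
      subst this
      exact Nat.one_pos
    · have h1 : (⋂ i ∈ Finset.range 1, Bset k i) = Bset k 0 := by
        simp
      rw [h1]
      show baseCol.support = _
      ext x
      simp only [Column.support, Set.mem_iUnion, Set.mem_setOf_eq, exists_prop,
        Finset.mem_singleton]
      constructor
      · rintro ⟨i, hx⟩
        have hi : i.val < 1 := i.isLt
        exact ⟨i, by omega, hx⟩
      · rintro ⟨i, _, hx⟩
        exact ⟨i, hx⟩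
    · simp
  | succ n ih =>
    obtain ⟨V, hVb, hVeq, hVcard⟩ := ih
    set m := k (n + 1) - k n with hm
    set h := (cols k n).h with hh
    have hpos : 0 < h := cols_h_pos k n
    have hm1 : 1 ≤ 2 ^ m := Nat.one_le_two_pow
    set V' := Finset.image (fun jt : ℕ × ℕ => jt.1 * h + jt.2)
      ((Finset.range (2 ^ m - 1)) ×ˢ V) with hV'
    have hmem : ∀ u, u ∈ V' ↔ (u % h ∈ V ∧ u < (2 ^ m - 1) * h) := by
      intro u
      rw [hV']
      simp only [Finset.mem_image, Finset.mem_product, Finset.mem_range, Prod.exists]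
      constructor
      · rintro ⟨j, t, ⟨hj, ht⟩, rfl⟩
        have hth : t < h := hVb t ht
        constructor
        · have hmod : (j * h + t) % h = t := by
            rw [mul_comm, Nat.mul_add_mod, Nat.mod_eq_of_lt hth]
          rw [hmod]
          exact ht
        · have h1 : j + 1 ≤ 2 ^ m - 1 := hj
          calc j * h + t < j * h + h := by omega
            _ = (j + 1) * h := by ring
            _ ≤ (2 ^ m - 1) * h := Nat.mul_le_mul_right h h1
      · rintro ⟨h1, h2⟩
        refine ⟨u / h, u % h, ⟨?_, h1⟩, ?_⟩
        · by_contra hcon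
          push_neg at hcon
          have hle : (2 ^ m - 1) * h ≤ (u / h) * h := Nat.mul_le_mul_right h hcon
          have h3 : (u / h) * h ≤ u := Nat.div_mul_le_self u h
          omega
        · rw [mul_comm]
          exact Nat.div_add_mod u h
    have hiterh : ((cols k n).iter m).h = 2 ^ m * h := Column.iter_h _ _
    have hVlt : ∀ v ∈ V', v < ((cols k n).iter m).h := by
      intro v hv
      have h1 := (hmem v).mp hv
      have hle : (2 ^ m - 1) * h ≤ 2 ^ m * h := Nat.mul_le_mul_right h (by omega)
      rw [hiterh]
      omega
    refine ⟨V', ?_, ?_, ?_⟩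
    · -- bound
      intro v hv
      have h1 : v < ((cols k n).iter m).h := hVlt v hv
      show v < ((cols k n).iter m).h + ((colA (n + 1)).iter (k (n + 1) - (n + 2))).h
      omega
    · -- the set identity
      have hdisj' := cols_levelsDisjoint k hk hk0 (n + 1)
      have hrange : (⋂ i ∈ Finset.range (n + 1 + 1), Bset k i)
          = Bset k (n + 1) ∩ ⋂ i ∈ Finset.range (n + 1), Bset k i := by
        rw [Finset.range_add_one]
        exact Finset.set_biInter_insert _ _ _
      rw [hrange, hVeq]
      have hmodset : {p : Fin h | p.val ∈ V} = {p : Fin h | p.val % h ∈ (↑V : Set ℕ)} := by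
        ext p
        simp [Nat.mod_eq_of_lt p.isLt]
      rw [hmodset, ← Column.iter_biUnion (cols k n) (cols_w_pos k hk hk0 n).le (↑V) m]
      have hlift : (⋃ p ∈ {p : Fin ((cols k n).iter m).h | p.val % h ∈ (↑V : Set ℕ)},
            ((cols k n).iter m).level p)
          = ⋃ q ∈ {q : Fin (cols k (n + 1)).h |
              q.val < ((cols k n).iter m).h ∧ q.val % h ∈ (↑V : Set ℕ)},
            (cols k (n + 1)).level q :=
        (Column.concat_biUnion_cast ((cols k n).iter m)
          ((colA (n + 1)).iter (k (n + 1) - (n + 2))) (fun u => u % h ∈ (↑V : Set ℕ))).symm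
      rw [hlift]
      have hBrw : Bset k (n + 1) = ⋃ q ∈ {q : Fin (cols k (n + 1)).h |
          q.val < (2 ^ m - 1) * h}, (cols k (n + 1)).level q := rfl
      rw [hBrw, Column.inter_biUnion_levels _ hdisj']
      have hsets : {q : Fin (cols k (n + 1)).h | q.val < (2 ^ m - 1) * h ∧
            (q.val < ((cols k n).iter m).h ∧ q.val % h ∈ (↑V : Set ℕ))}
          = {q : Fin (cols k (n + 1)).h | q.val ∈ V'} := by
        ext q
        simp only [Set.mem_setOf_eq, Finset.mem_coe, hmem]
        have hle : (2 ^ m - 1) * h ≤ 2 ^ m * h := Nat.mul_le_mul_right h (by omega)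
        constructor
        · rintro ⟨h1, _, h3⟩
          exact ⟨h3, h1⟩
        · rintro ⟨h1, h2⟩
          exact ⟨h2, by omega, h1⟩
      rw [hsets]
    · -- cardinality
      have hinj : Set.InjOn (fun jt : ℕ × ℕ => jt.1 * h + jt.2)
          ↑((Finset.range (2 ^ m - 1)) ×ˢ V) := by
        rintro ⟨j1, t1⟩ hm1' ⟨j2, t2⟩ hm2' heq
        simp only [Finset.coe_product, Set.mem_prod, Finset.mem_coe, Finset.mem_range] at hm1' hm2'
        have ht1 : t1 < h := hVb t1 hm1'.2
        have ht2 : t2 < h := hVb t2 hm2'.2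
        simp only at heq
        have e1 : (j1 * h + t1) % h = t1 := by
          rw [mul_comm, Nat.mul_add_mod, Nat.mod_eq_of_lt ht1]
        have e2 : (j2 * h + t2) % h = t2 := by
          rw [mul_comm, Nat.mul_add_mod, Nat.mod_eq_of_lt ht2]
        have htt : t1 = t2 := by rw [← e1, ← e2, heq]
        subst htt
        have hjj : j1 * h = j2 * h := by omega
        have : j1 = j2 := Nat.eq_of_mul_eq_mul_right hpos hjj
        simp [this]
      rw [hV', Finset.card_image_of_injOn hinj, Finset.card_product, Finset.card_range, hVcard,
        Finset.prod_Icc_succ_top (Nat.le_add_left 1 n)]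
      simp only [Nat.add_sub_cancel]
      ring

end MainInduction


section MeasureLemmas

variable (k : ℕ → ℕ) (hk : StrictMono k) (hk0 : k 0 = 1)

lemma ennreal_term (m : ℕ) : ((2 ^ m - 1 : ℕ) : ℝ≥0∞) * 2⁻¹ ^ m = 1 - 2⁻¹ ^ m := by
  have hne : (2 : ℝ≥0∞) ^ m ≠ 0 := pow_ne_zero m (by norm_num)
  have hnt : (2 : ℝ≥0∞) ^ m ≠ ∞ := ENNReal.pow_ne_top (by norm_num)
  have hcast : ((2 ^ m - 1 : ℕ) : ℝ≥0∞) = 2 ^ m - 1 := by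
    push_cast [Nat.cast_sub Nat.one_le_two_pow]
    ring
  rw [hcast, ← ENNReal.inv_pow, ENNReal.sub_mul (fun _ _ => ENNReal.inv_ne_top.mpr hne),
    ENNReal.mul_inv_cancel hne hnt, one_mul, ENNReal.inv_pow]

lemma ofReal_half : ENNReal.ofReal (2⁻¹ : ℝ) = (2 : ℝ≥0∞)⁻¹ := by
  rw [ENNReal.ofReal_inv_of_pos two_pos, ENNReal.ofReal_ofNat]

include hk hk0 in
lemma ofReal_w_prod (n : ℕ) : ENNReal.ofReal ((cols k n).w)
    = ENNReal.ofReal (1 / 2) * ∏ i ∈ Finset.Icc 1 n, (2 : ℝ≥0∞)⁻¹ ^ (k i - k (i - 1)) := by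
  induction n with
  | zero => norm_num [show (cols k 0).w = 1 / 2 from rfl]
  | succ n ih =>
    have hstep : (cols k (n + 1)).w = (cols k n).w / 2 ^ (k (n + 1) - k n) :=
      Column.iter_w (cols k n) (k (n + 1) - k n)
    have hdiv : (cols k n).w / 2 ^ (k (n + 1) - k n)
        = (cols k n).w * (2⁻¹ : ℝ) ^ (k (n + 1) - k n) := by
      rw [inv_pow, div_eq_mul_inv]
    rw [hstep, hdiv, ENNReal.ofReal_mul (cols_w_pos k hk hk0 n).le, ih,
      ENNReal.ofReal_pow (by norm_num), ofReal_half,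
      Finset.prod_Icc_succ_top (Nat.le_add_left 1 n)]
    simp only [Nat.add_sub_cancel]
    ring

include hk hk0 in
lemma volume_partial (n : ℕ) : volume (⋂ i ∈ Finset.range (n + 1), Bset k i)
    = ENNReal.ofReal (1 / 2) * ∏ i ∈ Finset.Icc 1 n, (1 - (2 : ℝ≥0∞)⁻¹ ^ (k i - k (i - 1))) := by
  obtain ⟨V, hVb, hVeq, hVcard⟩ := main_structure k hk hk0 n
  rw [hVeq, Column.volume_biUnion_levels _ (cols_levelsDisjoint k hk hk0 n) V hVb, hVcard,
    Nat.cast_prod, ofReal_w_prod k hk hk0 n, mul_comm, mul_assoc, ← Finset.prod_mul_distrib]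
  congr 1
  apply Finset.prod_congr rfl
  intro i _
  rw [mul_comm]
  exact ennreal_term _

lemma volume_B0 : volume (Bset k 0) = ENNReal.ofReal (1 / 2) := by
  show volume baseCol.support = _
  rw [baseCol_support, Real.volume_Ioc]
  norm_num

lemma real_aux : ∀ n : ℕ, 1 / 4 + (2⁻¹ : ℝ) ^ (n + 1) ≤ ∏ i ∈ Finset.Icc 1 n, (1 - (2⁻¹ : ℝ) ^ i) := by
  intro n
  induction n with
  | zero => norm_num
  | succ n ih =>
    rw [Finset.prod_Icc_succ_top (Nat.le_add_left 1 n)]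
    rcases Nat.eq_zero_or_pos n with rfl | hn
    · norm_num
    · have hx : (2⁻¹ : ℝ) ^ (n + 1) ≤ 1 / 4 := by
        calc (2⁻¹ : ℝ) ^ (n + 1) ≤ (2⁻¹ : ℝ) ^ 2 :=
              pow_le_pow_of_le_one (by norm_num) (by norm_num) (by omega)
          _ = 1 / 4 := by norm_num
      have hx0 : (0 : ℝ) ≤ (2⁻¹ : ℝ) ^ (n + 1) := by positivity
      have hx1 : (2⁻¹ : ℝ) ^ (n + 2) = (2⁻¹ : ℝ) ^ (n + 1) * 2⁻¹ := by ring
      nlinarith [ih]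

lemma real_prod_bound (n : ℕ) : (1 / 4 : ℝ) ≤ ∏ i ∈ Finset.Icc 1 n, (1 - (2⁻¹ : ℝ) ^ i) := by
  have := real_aux n
  have : (0 : ℝ) ≤ (2⁻¹ : ℝ) ^ (n + 1) := by positivity
  linarith [real_aux n]

lemma ennreal_prod_bound (hki : ∀ i : ℕ, 1 ≤ i → i ≤ k i - k (i - 1)) (n : ℕ) :
    ENNReal.ofReal (1 / 4) ≤ ∏ i ∈ Finset.Icc 1 n, (1 - (2 : ℝ≥0∞)⁻¹ ^ (k i - k (i - 1))) := by
  have step1 : ∏ i ∈ Finset.Icc 1 n, (1 - (2 : ℝ≥0∞)⁻¹ ^ i)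
      ≤ ∏ i ∈ Finset.Icc 1 n, (1 - (2 : ℝ≥0∞)⁻¹ ^ (k i - k (i - 1))) := by
    apply Finset.prod_le_prod'
    intro i hi
    apply tsub_le_tsub_left
    exact pow_le_pow_right_of_le_one' (by norm_num) (hki i (Finset.mem_Icc.mp hi).1)
  refine le_trans ?_ step1
  have hterm : ∀ i : ℕ, (1 - (2 : ℝ≥0∞)⁻¹ ^ i) = ENNReal.ofReal (1 - (2⁻¹ : ℝ) ^ i) := by
    intro i
    rw [ENNReal.ofReal_sub _ (by positivity), ENNReal.ofReal_one,
      ENNReal.ofReal_pow (by norm_num), ofReal_half]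
  calc ENNReal.ofReal (1 / 4) ≤ ENNReal.ofReal (∏ i ∈ Finset.Icc 1 n, (1 - (2⁻¹ : ℝ) ^ i)) :=
        ENNReal.ofReal_le_ofReal (real_prod_bound n)
    _ = ∏ i ∈ Finset.Icc 1 n, ENNReal.ofReal (1 - (2⁻¹ : ℝ) ^ i) := by
        rw [ENNReal.ofReal_prod_of_nonneg]
        intro i hi
        have : (2⁻¹ : ℝ) ^ i ≤ 1 := pow_le_one₀ (by norm_num) (by norm_num)
        linarith
    _ = ∏ i ∈ Finset.Icc 1 n, (1 - (2 : ℝ≥0∞)⁻¹ ^ i) := by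
        exact Finset.prod_congr rfl fun i _ => (hterm i).symm

end MeasureLemmas


/-- `λ(⋂_{i=0}^n B_i) = λ(B_0) ∏_{i=1}^n (1 - 2^{-(k_i-k_{i-1})})`, and if
`k_i - k_{i-1} ≥ i` for all `i ≥ 1`, then `λ(⋂_{i=0}^∞ B_i) > 0`. -/
theorem Bset_measure (k : ℕ → ℕ) (hk : StrictMono k) (hk0 : k 0 = 1) :
    (∀ n : ℕ, volume (⋂ i ∈ Finset.range (n + 1), Bset k i)
      = volume (Bset k 0) * ∏ i ∈ Finset.Icc 1 n, (1 - (2 : ℝ≥0∞)⁻¹ ^ (k i - k (i - 1)))) ∧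
    ((∀ i : ℕ, 1 ≤ i → i ≤ k i - k (i - 1)) → 0 < volume (⋂ i : ℕ, Bset k i)) := by
  constructor
  · intro n
    rw [volume_partial k hk hk0 n, volume_B0 k]
  · intro hki
    have hiInter : (⋂ i : ℕ, Bset k i) = ⋂ n, ⋂ i ∈ Finset.range (n + 1), Bset k i := by
      ext x
      simp only [Set.mem_iInter, Finset.mem_range]
      constructor
      · intro hx n i _
        exact hx i
      · intro hx i
        exact hx i i (by omega)
    have hmeas : ∀ n, NullMeasurableSet (⋂ i ∈ Finset.range (n + 1), Bset k i) volume := by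
      intro n
      obtain ⟨V, hVb, hVeq, -⟩ := main_structure k hk hk0 n
      rw [hVeq]
      exact (MeasurableSet.biUnion (Set.to_countable _)
        fun p _ => measurableSet_Ioc).nullMeasurableSet
    have hanti : Antitone (fun n => ⋂ i ∈ Finset.range (n + 1), Bset k i) := by
      apply antitone_nat_of_succ_le
      intro n x hx
      simp only [Set.mem_iInter, Finset.mem_range] at hx ⊢
      intro i hi
      exact hx i (by omega)
    have hdir : Directed (· ⊇ ·) (fun n => ⋂ i ∈ Finset.range (n + 1), Bset k i) :=
      hanti.directed_ge
    have hfin : volume (⋂ i ∈ Finset.range (0 + 1), Bset k i) ≠ ∞ := by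
      rw [volume_partial k hk hk0 0]
      simp [ENNReal.ofReal_ne_top]
    rw [hiInter, Directed.measure_iInter hmeas hdir ⟨0, hfin⟩]
    have hlow : ∀ n, ENNReal.ofReal (1 / 8)
        ≤ volume (⋂ i ∈ Finset.range (n + 1), Bset k i) := by
      intro n
      rw [volume_partial k hk hk0 n]
      calc ENNReal.ofReal (1 / 8) = ENNReal.ofReal (1 / 2) * ENNReal.ofReal (1 / 4) := by
            rw [← ENNReal.ofReal_mul (by norm_num)]
            norm_num
        _ ≤ _ := mul_le_mul_right (ennreal_prod_bound k hki n) _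
    exact lt_of_lt_of_le (ENNReal.ofReal_pos.mpr (by norm_num)) (le_iInf hlow)
end
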